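/- (Maximal mixedness of block A for partition B₀.) Let t ≥ 1 be an integer, set T = 2t and N = 8T−4, and let J_o, J_e ∈ ℝ. Let |ψ⟩ = (𝒰_e(J_e)·𝒰_o(J_o))^t |Φ_N⟩ and let A = {0,…,2T−1}. Then the reduced density matrix of |ψ⟩ on A is maximally mixed: ρ_A = 2^{−2T}·Id, where Id is the identity matrix indexed by A→{0,1}. -/

import Mathlib

open scoped Matrix Kronecker ComplexConjugate

noncomputable section

/-- The four Pauli matrices: `σ 0 = 1`, `σ 1 = σ_x`, `σ 2 = σ_y`, `σ 3 = σ_z`. -/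
def σ (α : Fin 4) : Matrix (Fin 2) (Fin 2) ℂ :=
  if α = 0 then 1
  else if α = 1 then !![0, 1; 1, 0]
  else if α = 2 then !![0, -Complex.I; Complex.I, 0]
  else !![1, 0; 0, -1]

/-- The Pauli string `P_a = ⊗_j σ_{a(j)}` on `p` qubits. -/
def pauliString (p : ℕ) (a : Fin p → Fin 4) :
    Matrix (Fin p → Fin 2) (Fin p → Fin 2) ℂ :=
  fun s t => ∏ j, σ (a j) (s j) (t j)

/-- The SWAP gate on two qubits: `SWAP|ab⟩ = |ba⟩`. -/
def swapGate : Matrix (Fin 2 × Fin 2) (Fin 2 × Fin 2) ℂ :=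
  fun p q => if p.1 = q.2 ∧ p.2 = q.1 then 1 else 0

/-- The dual-unitary XXZ gate `U(J) = exp(−iJ σ_z⊗σ_z)·SWAP`. -/
def gate (J : ℝ) : Matrix (Fin 2 × Fin 2) (Fin 2 × Fin 2) ℂ :=
  NormedSpace.exp ((-(Complex.I * (J:ℂ))) • (σ 3 ⊗ₖ σ 3)) * swapGate

/-- The even layer `𝒰_e(J)` on `2m` qubits: `U(J)` applied to pairs `(2j, 2j+1)`. -/
def evenLayer (m : ℕ) (J : ℝ) :
    Matrix (Fin (2*m) → Fin 2) (Fin (2*m) → Fin 2) ℂ :=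
  fun s t => ∏ j : Fin m,
    gate J
      (s ⟨2*j.val, by have := j.isLt; omega⟩, s ⟨2*j.val+1, by have := j.isLt; omega⟩)
      (t ⟨2*j.val, by have := j.isLt; omega⟩, t ⟨2*j.val+1, by have := j.isLt; omega⟩)

/-- The odd layer `𝒰_o(J)` on `2m` qubits with periodic boundary conditions:
`U(J)` applied to the pairs `(2j+1, 2j+2 mod 2m)`. -/
def oddLayer (m : ℕ) (J : ℝ) :
    Matrix (Fin (2*m) → Fin 2) (Fin (2*m) → Fin 2) ℂ :=
  fun s t => ∏ j : Fin m,
    gate J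
      (s ⟨(2*j.val+1) % (2*m), Nat.mod_lt _ (by have := j.isLt; omega)⟩,
       s ⟨(2*j.val+2) % (2*m), Nat.mod_lt _ (by have := j.isLt; omega)⟩)
      (t ⟨(2*j.val+1) % (2*m), Nat.mod_lt _ (by have := j.isLt; omega)⟩,
       t ⟨(2*j.val+2) % (2*m), Nat.mod_lt _ (by have := j.isLt; omega)⟩)

/-- The product of Bell pairs `|φ⁺⟩^{⊗m}` on `2m` qubits, `|φ⁺⟩ = (|00⟩+|11⟩)/√2`
on the pairs `(2j, 2j+1)`. -/
def bellState (m : ℕ) : (Fin (2*m) → Fin 2) → ℂ :=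
  fun s => ∏ j : Fin m,
    if s ⟨2*j.val, by have := j.isLt; omega⟩ = s ⟨2*j.val+1, by have := j.isLt; omega⟩
    then ((Real.sqrt 2 : ℂ))⁻¹ else 0

/-- The time-evolved state `|ψ⟩ = (𝒰_e(J_e)·𝒰_o(J_o))^t |Φ⟩` on `2m` qubits. -/
def psiState (m t : ℕ) (Jo Je : ℝ) : (Fin (2*m) → Fin 2) → ℂ :=
  ((evenLayer m Je * oddLayer m Jo)^t) *ᵥ bellState m

/-- Given an enumeration `ι` of a subset `S` of sites and an enumeration `κ` of its
complement, assemble a full configuration from a configuration `u` on `S` and `w` on `S^c`. -/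
def assemble {N p q : ℕ} (ι : Fin p → Fin N) (κ : Fin q → Fin N)
    (u : Fin p → Fin 2) (w : Fin q → Fin 2) : Fin N → Fin 2 :=
  fun i => if h : ∃ j, ι j = i then u h.choose
           else if h' : ∃ j, κ j = i then w h'.choose else 0

/-- The reduced density matrix `ρ_S` of a pure state `ψ` on the subset `S` of sites
enumerated by `ι` (with complement enumerated by `κ`):
`(ρ_S)_{u,v} = Σ_w ψ(u∪w)·conj(ψ(v∪w))`. -/
def rdm {N p q : ℕ} (ι : Fin p → Fin N) (κ : Fin q → Fin N)
    (ψ : (Fin N → Fin 2) → ℂ) : Matrix (Fin p → Fin 2) (Fin p → Fin 2) ℂ :=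
  fun u v => ∑ w : Fin q → Fin 2, ψ (assemble ι κ u w) * conj (ψ (assemble ι κ v w))

/-- `f_n(J) = cos(2J)^{2n} + sin(2J)^{2n}`. -/
def f (n : ℕ) (J : ℝ) : ℝ := Real.cos (2*J)^(2*n) + Real.sin (2*J)^(2*n)

/-- `g_n(J_o,J_e)`, the end-cap factor in the exact formula for `ζ_n(ρ_AB)`. -/
def g (n : ℕ) (Jo Je : ℝ) : ℝ :=
  (1/2^(2*n)) * ∑ k ∈ Finset.range 5, (Nat.choose 4 k : ℝ) *
    ∑ m ∈ Finset.range 2,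
      (Real.cos (2*Jo+2*Je)^(4-k) * Real.sin (2*Jo+2*Je)^k +
        (-1:ℝ)^m * Real.cos (2*Jo-2*Je)^(4-k) * Real.sin (2*Jo-2*Je)^k)^(2*n)

/-- Enumeration of the region `A∪B` for the partition `B₀` (with `T = 2t`, `N = 8T−4`):
`A = {0,…,2T−1}` followed by `B = {4T−2,…,6T−3}`. -/
def iotaAB (t : ℕ) : Fin (4*(2*t)) → Fin (2*(8*t-2)) :=
  fun j => if h : j.val < 2*(2*t) then ⟨j.val, by have := j.isLt; omega⟩
           else ⟨4*(2*t)-2 + (j.val - 2*(2*t)), by have := j.isLt; omega⟩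

/-- Enumeration of the complement of `A∪B` for the partition `B₀`: the two gaps
`{2T,…,4T−3}` and `{6T−2,…,8T−5}`, each of `2(T−1)` sites. -/
def kappaAB (t : ℕ) : Fin (4*(2*t)-4) → Fin (2*(8*t-2)) :=
  fun j => if h : j.val < 2*(2*t)-2 then ⟨2*(2*t) + j.val, by have := j.isLt; omega⟩
           else ⟨6*(2*t)-2 + (j.val - (2*(2*t)-2)), by have := j.isLt; omega⟩

/-- Enumeration of region `A = {0,…,2T−1}` (with `T = 2t`). -/
def iotaA (t : ℕ) : Fin (2*(2*t)) → Fin (2*(8*t-2)) :=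
  fun j => ⟨j.val, by have := j.isLt; omega⟩

/-- Enumeration of the complement of `A`: the sites `{2T,…,8T−5}`. -/
def kappaA (t : ℕ) : Fin (2*(8*t-2) - 2*(2*t)) → Fin (2*(8*t-2)) :=
  fun j => ⟨2*(2*t) + j.val, by have := j.isLt; omega⟩

def zf : Fin 2 → ℂ := fun b => if b = 0 then 1 else -1

lemma sigma3_kron : (σ 3 ⊗ₖ σ 3) = Matrix.diagonal (fun p : Fin 2 × Fin 2 => zf p.1 * zf p.2) := by
  ext ⟨a,b⟩ ⟨c,d⟩
  fin_cases a <;> fin_cases b <;> fin_cases c <;> fin_cases d <;>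
    simp [σ, zf, Matrix.diagonal, Matrix.kroneckerMap_apply, Prod.ext_iff, Matrix.one_apply] <;> norm_num

lemma gate_eq (J : ℝ) (p q : Fin 2 × Fin 2) :
    gate J p q = Complex.exp (-(Complex.I * (J:ℂ)) * (zf p.1 * zf p.2)) *
      (if p.1 = q.2 ∧ p.2 = q.1 then 1 else 0) := by
  unfold gate
  rw [sigma3_kron]
  rw [show (-(Complex.I * (J:ℂ))) • Matrix.diagonal (fun p : Fin 2 × Fin 2 => zf p.1 * zf p.2)
      = Matrix.diagonal (fun p : Fin 2 × Fin 2 => -(Complex.I * (J:ℂ)) * (zf p.1 * zf p.2)) from ?_]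
  · rw [Matrix.exp_diagonal, Matrix.diagonal_mul, Pi.coe_exp, ← Complex.exp_eq_exp_ℂ]
    rfl
  · rw [← Matrix.diagonal_smul]
    congr 1

-- site maps

def emS (N i : ℕ) : ℕ := if i % 2 = 0 then (i+1) % N else (i + (N-1)) % N

def omS (N i : ℕ) : ℕ := if i % 2 = 1 then (i+1) % N else (i + (N-1)) % N

def smS (n N i : ℕ) : ℕ := if i % 2 = 1 then (i + 2*n) % N else (i + n*(N-2)) % N

lemma emS_lt {N : ℕ} (i : ℕ) (hN : 0 < N) : emS N i < N := by
  unfold emS; split <;> exact Nat.mod_lt _ hN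

lemma omS_lt {N : ℕ} (i : ℕ) (hN : 0 < N) : omS N i < N := by
  unfold omS; split <;> exact Nat.mod_lt _ hN

lemma smS_lt {N : ℕ} (n i : ℕ) (hN : 0 < N) : smS n N i < N := by
  unfold smS; split <;> exact Nat.mod_lt _ hN

lemma prod_ite_one {n : ℕ} (p : Fin n → Prop) [DecidablePred p] [Decidable (∀ j, p j)] :
    (∏ j, (if p j then (1:ℂ) else 0)) = if (∀ j, p j) then 1 else 0 := by
  by_cases h : ∀ j, p j
  · rw [if_pos h]; simp [h]
  · rw [if_neg h]; push_neg at h; obtain ⟨j, hj⟩ := h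
    exact Finset.prod_eq_zero (Finset.mem_univ j) (by simp [hj])

lemma smS_zero {N : ℕ} (i : ℕ) (hi : i < N) : smS 0 N i = i := by
  unfold smS; split <;> simp [Nat.mod_eq_of_lt hi]

lemma smS_succ {N : ℕ} (hN2 : 2 ≤ N) (hNe : N % 2 = 0) (n i : ℕ) :
    smS n N (emS N (omS N i)) = smS (n+1) N i := by
  have hN : 0 < N := by omega
  rcases Nat.even_or_odd i with hi | hi
  · have hi2 : i % 2 = 0 := Nat.even_iff.mp hi
    have h1 : omS N i = (i + (N-1)) % N := by unfold omS; rw [if_neg]; omega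
    have hp1 : (i + (N-1)) % N % 2 = 1 := by
      rw [Nat.mod_mod_of_dvd _ (by omega : (2:ℕ) ∣ N)]; omega
    have h2 : emS N (omS N i) = (i + 2*(N-1)) % N := by
      rw [h1]; unfold emS; rw [if_neg (by omega)]
      rw [Nat.mod_add_mod]; ring_nf
    have hp2 : (i + 2*(N-1)) % N % 2 = 0 := by
      rw [Nat.mod_mod_of_dvd _ (by omega : (2:ℕ) ∣ N)]; omega
    rw [h2]; unfold smS
    rw [if_neg (by omega), if_neg (by omega), Nat.mod_add_mod]
    obtain ⟨K, rfl⟩ : ∃ K, N = K + 2 := ⟨N - 2, by omega⟩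
    have : i + 2 * (K + 2 - 1) + n * (K + 2 - 2) = (i + (n+1) * (K + 2 - 2)) + (K+2) := by
      simp only [show K + 2 - 1 = K + 1 from rfl, show K + 2 - 2 = K from rfl]; ring
    rw [this, Nat.add_mod_right]
  · have hi2 : i % 2 = 1 := Nat.odd_iff.mp hi
    have h1 : omS N i = (i + 1) % N := by unfold omS; rw [if_pos hi2]
    have hp1 : (i + 1) % N % 2 = 0 := by
      rw [Nat.mod_mod_of_dvd _ (by omega : (2:ℕ) ∣ N)]; omega
    have h2 : emS N (omS N i) = (i + 2) % N := by
      rw [h1]; unfold emS; rw [if_pos hp1, Nat.mod_add_mod]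
    have hp2 : (i + 2) % N % 2 = 1 := by
      rw [Nat.mod_mod_of_dvd _ (by omega : (2:ℕ) ∣ N)]; omega
    rw [h2]; unfold smS
    rw [if_pos hp2, if_pos hi2, Nat.mod_add_mod]
    congr 1; ring

def IsMono {n : ℕ} (M : Matrix (Fin n → Fin 2) (Fin n → Fin 2) ℂ)
    (c : (Fin n → Fin 2) → ℂ) (P : (Fin n → Fin 2) → (Fin n → Fin 2)) : Prop :=
  ∀ s r, M s r = c s * (if r = P s then 1 else 0)

lemma isMono_mul {n : ℕ} {M M' : Matrix (Fin n → Fin 2) (Fin n → Fin 2) ℂ}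
    {c c' P P'} (h : IsMono M c P) (h' : IsMono M' c' P') :
    IsMono (M * M') (fun s => c s * c' (P s)) (fun s => P' (P s)) := by
  intro s r
  rw [Matrix.mul_apply, Finset.sum_eq_single (P s)]
  · rw [h s (P s), h' (P s) r]; simp
  · intro x _ hx; rw [h s x]; simp [hx]
  · simp

lemma appc {n : ℕ} (s : Fin n → Fin 2) {a b : ℕ} (pa : a < n) (pb : b < n) (h : a = b) :
    s ⟨a, pa⟩ = s ⟨b, pb⟩ := by cases h; rfl

lemma emS_even {N i : ℕ} (h2 : i % 2 = 0) (hi : i < N) (hN : N % 2 = 0) : emS N i = i + 1 := by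
  unfold emS; rw [if_pos h2]; exact Nat.mod_eq_of_lt (by omega)

lemma emS_odd {N i : ℕ} (h2 : i % 2 = 1) (hi : i < N) : emS N i = i - 1 := by
  unfold emS; rw [if_neg (by omega)]
  have h : i + (N-1) = (i-1) + N := by omega
  rw [h, Nat.add_mod_right]; exact Nat.mod_eq_of_lt (by omega)

lemma zf_abs (a b : Fin 2) (J : ℝ) :
    ‖Complex.exp (-(Complex.I * (J:ℂ)) * (zf a * zf b))‖ = 1 := by
  fin_cases a <;> fin_cases b <;>
    simp [zf, Complex.norm_exp] <;> norm_num [Complex.mul_re]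

lemma evenLayer_isMono (m : ℕ) (J : ℝ) :
    ∃ c : (Fin (2*m) → Fin 2) → ℂ, (∀ s, ‖c s‖ = 1) ∧
      IsMono (evenLayer m J) c
        (fun s i => s ⟨emS (2*m) i.val, emS_lt i.val (by have := i.isLt; omega)⟩) := by
  refine ⟨fun s => ∏ j : Fin m, Complex.exp (-(Complex.I * (J:ℂ)) *
      (zf (s ⟨2*j.val, by have := j.isLt; omega⟩) * zf (s ⟨2*j.val+1, by have := j.isLt; omega⟩))),
    ?_, ?_⟩
  · intro s; rw [norm_prod]
    simp only [zf_abs]; simp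
  · intro s r
    unfold evenLayer
    rw [Finset.prod_congr rfl (fun j _ => gate_eq J _ _), Finset.prod_mul_distrib]
    congr 1
    rw [prod_ite_one]
    refine if_congr ?_ rfl rfl
    constructor
    · intro h; funext i
      rcases Nat.even_or_odd i.val with he | ho
      · have he2 : i.val % 2 = 0 := Nat.even_iff.mp he
        have h2 : s ⟨2*(i.val/2)+1, by have := i.isLt; omega⟩
            = r ⟨2*(i.val/2), by have := i.isLt; omega⟩ :=
          (h ⟨i.val/2, by have := i.isLt; omega⟩).2
        have e1 : r i = r ⟨2*(i.val/2), by have := i.isLt; omega⟩ := appc r _ _ (by omega)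
        rw [e1, ← h2]
        refine appc s _ _ ?_
        rw [emS_even he2 i.isLt (by omega)]; omega
      · have ho2 : i.val % 2 = 1 := Nat.odd_iff.mp ho
        have h1 : s ⟨2*(i.val/2), by have := i.isLt; omega⟩
            = r ⟨2*(i.val/2)+1, by have := i.isLt; omega⟩ :=
          (h ⟨i.val/2, by have := i.isLt; omega⟩).1
        have e1 : r i = r ⟨2*(i.val/2)+1, by have := i.isLt; omega⟩ := appc r _ _ (by omega)
        rw [e1, ← h1]
        refine appc s _ _ ?_
        rw [emS_odd ho2 i.isLt]; omega
    · rintro rfl j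
      constructor
      · refine appc s _ _ ?_
        show 2*j.val = emS (2*m) (2*j.val+1)
        rw [emS_odd (by omega) (by have := j.isLt; omega)]; omega
      · refine appc s _ _ ?_
        show 2*j.val+1 = emS (2*m) (2*j.val)
        rw [emS_even (by omega) (by have := j.isLt; omega) (by omega)]

lemma omS_odd {N i : ℕ} (h2 : i % 2 = 1) : omS N i = (i+1) % N := if_pos h2

lemma omS_even {N i : ℕ} (h2 : i % 2 = 0) : omS N i = (i + (N-1)) % N := by
  unfold omS; rw [if_neg (by omega)]

lemma oddLayer_isMono (m : ℕ) (J : ℝ) :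
    ∃ c : (Fin (2*m) → Fin 2) → ℂ, (∀ s, ‖c s‖ = 1) ∧
      IsMono (oddLayer m J) c
        (fun s i => s ⟨omS (2*m) i.val, omS_lt i.val (by have := i.isLt; omega)⟩) := by
  refine ⟨fun s => ∏ j : Fin m, Complex.exp (-(Complex.I * (J:ℂ)) *
      (zf (s ⟨(2*j.val+1) % (2*m), Nat.mod_lt _ (by have := j.isLt; omega)⟩) *
       zf (s ⟨(2*j.val+2) % (2*m), Nat.mod_lt _ (by have := j.isLt; omega)⟩))),
    ?_, ?_⟩
  · intro s; rw [norm_prod]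
    simp only [zf_abs]; simp
  · intro s r
    unfold oddLayer
    rw [Finset.prod_congr rfl (fun j _ => gate_eq J _ _), Finset.prod_mul_distrib]
    congr 1
    rw [prod_ite_one]
    refine if_congr ?_ rfl rfl
    constructor
    · intro h; funext i
      rcases Nat.even_or_odd i.val with he | ho
      · have he2 : i.val % 2 = 0 := Nat.even_iff.mp he
        rcases Nat.eq_zero_or_pos i.val with hi0 | hip
        · have h1 : s ⟨(2*(m-1)+1)%(2*m), Nat.mod_lt _ (by have := i.isLt; omega)⟩
              = r ⟨(2*(m-1)+2)%(2*m), Nat.mod_lt _ (by have := i.isLt; omega)⟩ :=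
            (h ⟨m-1, by have := i.isLt; omega⟩).1
          have e1 : r i = r ⟨(2*(m-1)+2)%(2*m), Nat.mod_lt _ (by have := i.isLt; omega)⟩ := by
            refine appc r _ _ ?_
            rw [show 2*(m-1)+2 = 2*m from by have := i.isLt; omega, Nat.mod_self]; omega
          rw [e1, ← h1]
          refine appc s _ _ ?_
          show (2*(m-1)+1)%(2*m) = omS (2*m) i.val
          rw [omS_even he2, hi0, Nat.mod_eq_of_lt (by have := i.isLt; omega),
            Nat.mod_eq_of_lt (by have := i.isLt; omega)]
          have := i.isLt; omega
        · have h1 : s ⟨(2*(i.val/2-1)+1)%(2*m), Nat.mod_lt _ (by have := i.isLt; omega)⟩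
              = r ⟨(2*(i.val/2-1)+2)%(2*m), Nat.mod_lt _ (by have := i.isLt; omega)⟩ :=
            (h ⟨i.val/2-1, by have := i.isLt; omega⟩).1
          have e1 : r i = r ⟨(2*(i.val/2-1)+2)%(2*m), Nat.mod_lt _ (by have := i.isLt; omega)⟩ := by
            refine appc r _ _ ?_
            rw [Nat.mod_eq_of_lt (by have := i.isLt; omega)]; omega
          rw [e1, ← h1]
          refine appc s _ _ ?_
          show (2*(i.val/2-1)+1)%(2*m) = omS (2*m) i.val
          rw [omS_even he2, Nat.mod_eq_of_lt (by have := i.isLt; omega),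
            show i.val + (2*m-1) = (i.val-1) + 2*m from by have := i.isLt; omega,
            Nat.add_mod_right, Nat.mod_eq_of_lt (by have := i.isLt; omega)]
          omega
      · have ho2 : i.val % 2 = 1 := Nat.odd_iff.mp ho
        have h2 : s ⟨(2*((i.val-1)/2)+2)%(2*m), Nat.mod_lt _ (by have := i.isLt; omega)⟩
            = r ⟨(2*((i.val-1)/2)+1)%(2*m), Nat.mod_lt _ (by have := i.isLt; omega)⟩ :=
          (h ⟨(i.val-1)/2, by have := i.isLt; omega⟩).2
        have e1 : r i = r ⟨(2*((i.val-1)/2)+1)%(2*m), Nat.mod_lt _ (by have := i.isLt; omega)⟩ := by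
          refine appc r _ _ ?_
          rw [Nat.mod_eq_of_lt (by have := i.isLt; omega)]; omega
        rw [e1, ← h2]
        refine appc s _ _ ?_
        show (2*((i.val-1)/2)+2)%(2*m) = omS (2*m) i.val
        rw [omS_odd ho2,
          show 2*((i.val-1)/2)+2 = i.val+1 from by omega]
    · rintro rfl j
      have hj := j.isLt
      constructor
      · refine appc s _ _ ?_
        show (2*j.val+1)%(2*m) = omS (2*m) ((2*j.val+2)%(2*m))
        have hp : ((2*j.val+2)%(2*m)) % 2 = 0 := by
          rw [Nat.mod_mod_of_dvd _ ⟨m, rfl⟩]; omega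
        rw [omS_even hp, Nat.mod_add_mod,
          show 2*j.val+2+(2*m-1) = (2*j.val+1) + 2*m from by omega, Nat.add_mod_right]
      · refine appc s _ _ ?_
        show (2*j.val+2)%(2*m) = omS (2*m) ((2*j.val+1)%(2*m))
        have h1 : (2*j.val+1)%(2*m) = 2*j.val+1 := Nat.mod_eq_of_lt (by omega)
        rw [h1, omS_odd (by omega)]

lemma isMono_congrP {n : ℕ} {M : Matrix (Fin n → Fin 2) (Fin n → Fin 2) ℂ} {c P Q}
    (h : P = Q) (hM : IsMono M c P) : IsMono M c Q := h ▸ hM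

lemma pow_isMono (m : ℕ) (Jo Je : ℝ) (n : ℕ) :
    ∃ c, (∀ s, ‖c s‖ = 1) ∧
      IsMono ((evenLayer m Je * oddLayer m Jo)^n) c
        (fun s i => s ⟨smS n (2*m) i.val, smS_lt n i.val (by have := i.isLt; omega)⟩) := by
  induction n with
  | zero =>
    refine ⟨fun _ => 1, fun s => by simp, ?_⟩
    intro s r
    rw [pow_zero, Matrix.one_apply]
    beta_reduce
    rw [one_mul]
    refine if_congr ?_ rfl rfl
    constructor
    · rintro rfl
      funext i
      exact appc s i.isLt _ (smS_zero i.val i.isLt).symm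
    · intro h
      rw [h]
      funext i
      exact appc s i.isLt _ (smS_zero i.val i.isLt).symm
  | succ n ih =>
    obtain ⟨c, hc, hM⟩ := ih
    obtain ⟨ce, hce, hMe⟩ := evenLayer_isMono m Je
    obtain ⟨co, hco, hMo⟩ := oddLayer_isMono m Jo
    have hstep := isMono_mul hMe hMo
    have hfull := isMono_mul hM hstep
    rw [← pow_succ] at hfull
    refine ⟨_, ?_, isMono_congrP ?_ hfull⟩
    · intro s
      rw [norm_mul, hc, norm_mul, hce, hco, one_mul, one_mul]
    · funext s i
      show s ⟨smS n (2*m) (emS (2*m) (omS (2*m) i.val)), _⟩ = s ⟨smS (n+1) (2*m) i.val, _⟩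
      exact appc s _ _ (smS_succ (by have := i.isLt; omega) (by omega) n i.val)

lemma psi_eq (m t : ℕ) (Jo Je : ℝ) :
    ∃ c : (Fin (2*m) → Fin 2) → ℂ, (∀ s, ‖c s‖ = 1) ∧ ∀ s,
      psiState m t Jo Je s = c s * ∏ j : Fin m,
        (if s ⟨smS t (2*m) (2*j.val), smS_lt t _ (by have := j.isLt; omega)⟩
            = s ⟨smS t (2*m) (2*j.val+1), smS_lt t _ (by have := j.isLt; omega)⟩
         then ((Real.sqrt 2 : ℂ))⁻¹ else 0) := by
  obtain ⟨c, hc, hM⟩ := pow_isMono m Jo Je t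
  refine ⟨c, hc, fun s => ?_⟩
  unfold psiState
  rw [Matrix.mulVec, show (((evenLayer m Je * oddLayer m Jo)^t) s ⬝ᵥ bellState m)
      = ∑ r, ((evenLayer m Je * oddLayer m Jo)^t) s r * bellState m r from rfl]
  rw [Finset.sum_congr rfl (fun r _ => by rw [hM s r])]
  rw [Finset.sum_congr rfl (fun r _ => mul_assoc _ _ _), ← Finset.mul_sum]
  congr 1
  rw [Finset.sum_eq_single ((fun s (i : Fin (2*m)) =>
      s ⟨smS t (2*m) i.val, smS_lt t i.val (by have := i.isLt; omega)⟩) s)]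
  · rw [if_pos rfl, one_mul]
    rfl
  · intro r _ hr
    rw [if_neg hr, zero_mul]
  · simp

def Sfun (t : ℕ) (u : Fin (2*(2*t)) → Fin 2) (w : Fin (2*(8*t-2) - 2*(2*t)) → Fin 2) :
    Fin (2*(8*t-2)) → Fin 2 :=
  fun i => if h : i.val < 2*(2*t) then u ⟨i.val, h⟩
           else w ⟨i.val - 2*(2*t), by have := i.isLt; omega⟩

lemma assemble_eq (t : ℕ) (u : Fin (2*(2*t)) → Fin 2)
    (w : Fin (2*(8*t-2) - 2*(2*t)) → Fin 2) :
    assemble (iotaA t) (kappaA t) u w = Sfun t u w := by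
  funext i
  unfold assemble Sfun
  by_cases h : i.val < 2*(2*t)
  · have hex : ∃ j, iotaA t j = i := ⟨⟨i.val, h⟩, Fin.ext rfl⟩
    rw [dif_pos hex, dif_pos h]
    have hval : hex.choose.val = i.val := congrArg Fin.val hex.choose_spec
    exact appc u _ _ hval
  · have hnex : ¬ ∃ j, iotaA t j = i := by
      rintro ⟨j, rfl⟩
      exact h j.isLt
    have hex : ∃ j, kappaA t j = i :=
      ⟨⟨i.val - 2*(2*t), by have := i.isLt; omega⟩,
        Fin.ext (show 2*(2*t) + (i.val - 2*(2*t)) = i.val by omega)⟩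
    rw [dif_neg hnex, dif_pos hex, dif_neg h]
    have h2 : 2*(2*t) + hex.choose.val = i.val := congrArg Fin.val hex.choose_spec
    have h3 : hex.choose.val = i.val - 2*(2*t) := by omega
    exact appc w _ _ h3

lemma mod_eval {N x v : ℕ} (hv : v < N) (h : x = v ∨ x = v + N) : x % N = v := by
  rcases h with rfl | rfl
  · exact Nat.mod_eq_of_lt hv
  · rw [Nat.add_mod_right]; exact Nat.mod_eq_of_lt hv

lemma key_mod (t N : ℕ) (ht : 1 ≤ t) (h2 : 2*t ≤ N) (i : ℕ) :
    (i + t*(N-2)) % N = (i + (N - 2*t)) % N := by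
  obtain ⟨k, rfl⟩ : ∃ k, t = k+1 := ⟨t-1, by omega⟩
  obtain ⟨M, rfl⟩ : ∃ M, N = M + 2*(k+1) := ⟨N - 2*(k+1), by omega⟩
  have e1 : M + 2*(k+1) - 2 = M + 2*k := by omega
  have e2 : M + 2*(k+1) - 2*(k+1) = M := by omega
  rw [e1, e2, show i + (k+1)*(M+2*k) = (i + M) + k*(M+2*(k+1)) from by ring,
    Nat.add_mul_mod_self_right]

lemma smA (t j : ℕ) (ht : 1 ≤ t) (hj : j < 8*t-2) :
    smS t (2*(8*t-2)) (2*j) = if j < t then 2*j+14*t-4 else 2*j-2*t := by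
  unfold smS
  rw [if_neg (by omega), key_mod t _ ht (by omega),
    show 2*(8*t-2) - 2*t = 14*t-4 from by omega]
  split
  · exact mod_eval (by omega) (Or.inl (by omega))
  · exact mod_eval (by omega) (Or.inr (by omega))

lemma smB (t j : ℕ) (ht : 1 ≤ t) (hj : j < 8*t-2) :
    smS t (2*(8*t-2)) (2*j+1) = if j < 7*t-2 then 2*j+2*t+1 else 2*j+5-14*t := by
  unfold smS
  rw [if_pos (by omega)]
  split
  · exact mod_eval (by omega) (Or.inl (by omega))
  · exact mod_eval (by omega) (Or.inr (by omega))

lemma Sfun_u (t : ℕ) (u : Fin (2*(2*t)) → Fin 2) (w : Fin (2*(8*t-2) - 2*(2*t)) → Fin 2)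
    {i a : ℕ} (hi : i < 2*(8*t-2)) (ha : a < 2*(2*t)) (h : i = a) :
    Sfun t u w ⟨i, hi⟩ = u ⟨a, ha⟩ := by subst h; exact dif_pos ha

lemma Sfun_w (t : ℕ) (u : Fin (2*(2*t)) → Fin 2) (w : Fin (2*(8*t-2) - 2*(2*t)) → Fin 2)
    {i a : ℕ} (hi : i < 2*(8*t-2)) (ha : a < 2*(8*t-2) - 2*(2*t)) (h : i = 2*(2*t) + a) :
    Sfun t u w ⟨i, hi⟩ = w ⟨a, ha⟩ := by
  subst h
  unfold Sfun
  rw [dif_neg (show ¬((⟨2*(2*t) + a, hi⟩ : Fin (2*(8*t-2))).val < 2*(2*t)) by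
    show ¬(2*(2*t) + a < 2*(2*t)); omega)]
  exact appc w _ _ (show 2*(2*t) + a - 2*(2*t) = a by omega)

def Valid (t : ℕ) (u : Fin (2*(2*t)) → Fin 2) (w : Fin (2*(8*t-2) - 2*(2*t)) → Fin 2) : Prop :=
  ∀ j : Fin (8*t-2),
    Sfun t u w ⟨smS t (2*(8*t-2)) (2*j.val), smS_lt _ _ (by have := j.isLt; omega)⟩ =
    Sfun t u w ⟨smS t (2*(8*t-2)) (2*j.val+1), smS_lt _ _ (by have := j.isLt; omega)⟩

lemma valid_at (t : ℕ) (u : Fin (2*(2*t)) → Fin 2) (w : Fin (2*(8*t-2) - 2*(2*t)) → Fin 2)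
    (hV : Valid t u w) (j : ℕ) (hj : j < 8*t-2) :
    Sfun t u w ⟨smS t (2*(8*t-2)) (2*j), smS_lt _ _ (by omega)⟩ =
    Sfun t u w ⟨smS t (2*(8*t-2)) (2*j+1), smS_lt _ _ (by omega)⟩ := hV ⟨j, hj⟩

lemma valid_iff (t : ℕ) (ht : 1 ≤ t) (u : Fin (2*(2*t)) → Fin 2)
    (w : Fin (2*(8*t-2) - 2*(2*t)) → Fin 2) :
    Valid t u w ↔
      ((∀ k (hk : k < 2*t), w ⟨2*k+1, by omega⟩ = u ⟨2*k, by omega⟩) ∧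
       (∀ k (hk : k < 2*t), w ⟨2*k+8*t-4, by omega⟩ = u ⟨2*k+1, by omega⟩) ∧
       (∀ k (hk : k < 4*t-2), w ⟨2*k, by omega⟩ = w ⟨2*k+4*t+1, by omega⟩)) := by
  constructor
  · intro hV
    refine ⟨?_, ?_, ?_⟩
    · intro k hk
      have eA : Sfun t u w ⟨smS t (2*(8*t-2)) (2*(k+t)), smS_lt _ _ (by omega)⟩
          = u ⟨2*k, by omega⟩ :=
        Sfun_u t u w _ (by omega) (by rw [smA t (k+t) ht (by omega), if_neg (by omega)]; omega)
      have eB : Sfun t u w ⟨smS t (2*(8*t-2)) (2*(k+t)+1), smS_lt _ _ (by omega)⟩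
          = w ⟨2*k+1, by omega⟩ :=
        Sfun_w t u w _ (by omega) (by rw [smB t (k+t) ht (by omega), if_pos (by omega)]; omega)
      exact eB.symm.trans ((valid_at t u w hV (k+t) (by omega)).symm.trans eA)
    · intro k hk
      rcases Nat.lt_or_ge k t with hkt | hkt
      · have eA : Sfun t u w ⟨smS t (2*(8*t-2)) (2*(k+7*t-2)), smS_lt _ _ (by omega)⟩
            = w ⟨2*k+8*t-4, by omega⟩ :=
          Sfun_w t u w _ (by omega)
            (by rw [smA t (k+7*t-2) ht (by omega), if_neg (by omega)]; omega)
        have eB : Sfun t u w ⟨smS t (2*(8*t-2)) (2*(k+7*t-2)+1), smS_lt _ _ (by omega)⟩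
            = u ⟨2*k+1, by omega⟩ :=
          Sfun_u t u w _ (by omega)
            (by rw [smB t (k+7*t-2) ht (by omega), if_neg (by omega)]; omega)
        exact eA.symm.trans ((valid_at t u w hV (k+7*t-2) (by omega)).trans eB)
      · have eA : Sfun t u w ⟨smS t (2*(8*t-2)) (2*(k-t)), smS_lt _ _ (by omega)⟩
            = w ⟨2*k+8*t-4, by omega⟩ :=
          Sfun_w t u w _ (by omega)
            (by rw [smA t (k-t) ht (by omega), if_pos (by omega)]; omega)
        have eB : Sfun t u w ⟨smS t (2*(8*t-2)) (2*(k-t)+1), smS_lt _ _ (by omega)⟩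
            = u ⟨2*k+1, by omega⟩ :=
          Sfun_u t u w _ (by omega)
            (by rw [smB t (k-t) ht (by omega), if_pos (by omega)]; omega)
        exact eA.symm.trans ((valid_at t u w hV (k-t) (by omega)).trans eB)
    · intro k hk
      have eA : Sfun t u w ⟨smS t (2*(8*t-2)) (2*(k+3*t)), smS_lt _ _ (by omega)⟩
          = w ⟨2*k, by omega⟩ :=
        Sfun_w t u w _ (by omega)
          (by rw [smA t (k+3*t) ht (by omega), if_neg (by omega)]; omega)
      have eB : Sfun t u w ⟨smS t (2*(8*t-2)) (2*(k+3*t)+1), smS_lt _ _ (by omega)⟩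
          = w ⟨2*k+4*t+1, by omega⟩ :=
        Sfun_w t u w _ (by omega)
          (by rw [smB t (k+3*t) ht (by omega), if_pos (by omega)]; omega)
      exact eA.symm.trans ((valid_at t u w hV (k+3*t) (by omega)).trans eB)
  · rintro ⟨h1, h23, h4⟩ j
    have hj := j.isLt
    rcases Nat.lt_or_ge j.val t with hr1 | hr1
    · have eA : Sfun t u w ⟨smS t (2*(8*t-2)) (2*j.val), smS_lt _ _ (by omega)⟩
          = w ⟨2*(j.val+t)+8*t-4, by omega⟩ :=
        Sfun_w t u w _ (by omega) (by rw [smA t j.val ht hj, if_pos (by omega)]; omega)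
      have eB : Sfun t u w ⟨smS t (2*(8*t-2)) (2*j.val+1), smS_lt _ _ (by omega)⟩
          = u ⟨2*(j.val+t)+1, by omega⟩ :=
        Sfun_u t u w _ (by omega) (by rw [smB t j.val ht hj, if_pos (by omega)]; omega)
      exact eA.trans ((h23 (j.val+t) (by omega)).trans eB.symm)
    rcases Nat.lt_or_ge j.val (3*t) with hr2 | hr2
    · have eA : Sfun t u w ⟨smS t (2*(8*t-2)) (2*j.val), smS_lt _ _ (by omega)⟩
          = u ⟨2*(j.val-t), by omega⟩ :=
        Sfun_u t u w _ (by omega) (by rw [smA t j.val ht hj, if_neg (by omega)]; omega)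
      have eB : Sfun t u w ⟨smS t (2*(8*t-2)) (2*j.val+1), smS_lt _ _ (by omega)⟩
          = w ⟨2*(j.val-t)+1, by omega⟩ :=
        Sfun_w t u w _ (by omega) (by rw [smB t j.val ht hj, if_pos (by omega)]; omega)
      exact eA.trans ((h1 (j.val-t) (by omega)).symm.trans eB.symm)
    rcases Nat.lt_or_ge j.val (7*t-2) with hr3 | hr3
    · have eA : Sfun t u w ⟨smS t (2*(8*t-2)) (2*j.val), smS_lt _ _ (by omega)⟩
          = w ⟨2*(j.val-3*t), by omega⟩ :=
        Sfun_w t u w _ (by omega) (by rw [smA t j.val ht hj, if_neg (by omega)]; omega)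
      have eB : Sfun t u w ⟨smS t (2*(8*t-2)) (2*j.val+1), smS_lt _ _ (by omega)⟩
          = w ⟨2*(j.val-3*t)+4*t+1, by omega⟩ :=
        Sfun_w t u w _ (by omega) (by rw [smB t j.val ht hj, if_pos (by omega)]; omega)
      exact eA.trans ((h4 (j.val-3*t) (by omega)).trans eB.symm)
    · have eA : Sfun t u w ⟨smS t (2*(8*t-2)) (2*j.val), smS_lt _ _ (by omega)⟩
          = w ⟨2*(j.val-(7*t-2))+8*t-4, by omega⟩ :=
        Sfun_w t u w _ (by omega) (by rw [smA t j.val ht hj, if_neg (by omega)]; omega)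
      have eB : Sfun t u w ⟨smS t (2*(8*t-2)) (2*j.val+1), smS_lt _ _ (by omega)⟩
          = u ⟨2*(j.val-(7*t-2))+1, by omega⟩ :=
        Sfun_u t u w _ (by omega) (by rw [smB t j.val ht hj, if_neg (by omega)]; omega)
      exact eA.trans ((h23 (j.val-(7*t-2)) (by omega)).trans eB.symm)

def solMap (t : ℕ) (ht : 1 ≤ t) (u : Fin (2*(2*t)) → Fin 2) (x : Fin (4*t-2) → Fin 2) :
    Fin (2*(8*t-2) - 2*(2*t)) → Fin 2 := fun i =>
  if h2 : i.val % 2 = 1 then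
    (if h1 : i.val < 4*t then u ⟨i.val - 1, by omega⟩
     else x ⟨(i.val - (4*t+1))/2, by have := i.isLt; omega⟩)
  else if h3 : i.val < 8*t-4 then x ⟨i.val/2, by have := i.isLt; omega⟩
  else u ⟨i.val - (8*t-5), by have := i.isLt; omega⟩

lemma solMap_1 (t : ℕ) (ht : 1 ≤ t) (u : Fin (2*(2*t)) → Fin 2) (x : Fin (4*t-2) → Fin 2)
    {i a : ℕ} (hi : i < 2*(8*t-2) - 2*(2*t)) (ha : a < 2*(2*t))
    (h : ∃ k, k < 2*t ∧ i = 2*k+1 ∧ a = 2*k) :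
    solMap t ht u x ⟨i, hi⟩ = u ⟨a, ha⟩ := by
  obtain ⟨k, hk, rfl, rfl⟩ := h
  unfold solMap
  simp only [Fin.val_mk]
  rw [dif_pos (by omega), dif_pos (by omega)]
  exact appc u _ _ (by omega)

lemma solMap_2 (t : ℕ) (ht : 1 ≤ t) (u : Fin (2*(2*t)) → Fin 2) (x : Fin (4*t-2) → Fin 2)
    {i a : ℕ} (hi : i < 2*(8*t-2) - 2*(2*t)) (ha : a < 4*t-2)
    (h : i = 2*a+4*t+1) :
    solMap t ht u x ⟨i, hi⟩ = x ⟨a, ha⟩ := by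
  subst h
  unfold solMap
  simp only [Fin.val_mk]
  rw [dif_pos (by omega), dif_neg (by omega)]
  exact appc x _ _ (by omega)

lemma solMap_3 (t : ℕ) (ht : 1 ≤ t) (u : Fin (2*(2*t)) → Fin 2) (x : Fin (4*t-2) → Fin 2)
    {i a : ℕ} (hi : i < 2*(8*t-2) - 2*(2*t)) (ha : a < 4*t-2)
    (h : i = 2*a) :
    solMap t ht u x ⟨i, hi⟩ = x ⟨a, ha⟩ := by
  subst h
  unfold solMap
  simp only [Fin.val_mk]
  rw [dif_neg (by omega), dif_pos (by omega)]
  exact appc x _ _ (by omega)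

lemma solMap_4 (t : ℕ) (ht : 1 ≤ t) (u : Fin (2*(2*t)) → Fin 2) (x : Fin (4*t-2) → Fin 2)
    {i a : ℕ} (hi : i < 2*(8*t-2) - 2*(2*t)) (ha : a < 2*(2*t))
    (h : ∃ k, k < 2*t ∧ i = 2*k+8*t-4 ∧ a = 2*k+1) :
    solMap t ht u x ⟨i, hi⟩ = u ⟨a, ha⟩ := by
  obtain ⟨k, hk, rfl, rfl⟩ := h
  unfold solMap
  simp only [Fin.val_mk]
  rw [dif_neg (by omega), dif_neg (by omega)]
  exact appc u _ _ (by omega)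

lemma valid_solMap (t : ℕ) (ht : 1 ≤ t) (u : Fin (2*(2*t)) → Fin 2)
    (x : Fin (4*t-2) → Fin 2) : Valid t u (solMap t ht u x) := by
  rw [valid_iff t ht]
  refine ⟨?_, ?_, ?_⟩
  · intro k hk
    exact solMap_1 t ht u x _ _ ⟨k, hk, rfl, rfl⟩
  · intro k hk
    exact solMap_4 t ht u x _ _ ⟨k, hk, by omega, rfl⟩
  · intro k hk
    rw [solMap_3 t ht u x _ hk rfl, solMap_2 t ht u x _ hk rfl]

lemma valid_eq_solMap (t : ℕ) (ht : 1 ≤ t) (u : Fin (2*(2*t)) → Fin 2)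
    (w : Fin (2*(8*t-2) - 2*(2*t)) → Fin 2) (hV : Valid t u w) :
    w = solMap t ht u (fun k => w ⟨2*k.val, by have := k.isLt; omega⟩) := by
  obtain ⟨h1, h23, h4⟩ := (valid_iff t ht u w).mp hV
  funext i
  have hi := i.isLt
  set x : Fin (4*t-2) → Fin 2 := fun k => w ⟨2*k.val, by have := k.isLt; omega⟩ with hx
  rcases Nat.even_or_odd i.val with he | ho
  · have he2 : i.val % 2 = 0 := Nat.even_iff.mp he
    rcases Nat.lt_or_ge i.val (8*t-4) with hlt | hge
    · have e1 : solMap t ht u x ⟨i.val, hi⟩ = x ⟨i.val/2, by omega⟩ :=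
        solMap_3 t ht u x _ (by omega) (by omega)
      have e2 : x ⟨i.val/2, by omega⟩ = w ⟨2*(i.val/2), by omega⟩ := rfl
      rw [show i = (⟨i.val, hi⟩ : Fin _) from Fin.ext rfl, e1, e2]
      exact (appc w _ _ (by omega)).symm
    · have e1 : solMap t ht u x ⟨i.val, hi⟩ = u ⟨2*((i.val-(8*t-4))/2)+1, by omega⟩ :=
        solMap_4 t ht u x _ _ ⟨(i.val-(8*t-4))/2, by omega, by omega, rfl⟩
      rw [show i = (⟨i.val, hi⟩ : Fin _) from Fin.ext rfl, e1,
        ← h23 ((i.val-(8*t-4))/2) (by omega)]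
      exact appc w _ _ (by omega)
  · have ho2 : i.val % 2 = 1 := Nat.odd_iff.mp ho
    rcases Nat.lt_or_ge i.val (4*t) with hlt | hge
    · have e1 : solMap t ht u x ⟨i.val, hi⟩ = u ⟨2*(i.val/2), by omega⟩ :=
        solMap_1 t ht u x _ _ ⟨i.val/2, by omega, by omega, rfl⟩
      rw [show i = (⟨i.val, hi⟩ : Fin _) from Fin.ext rfl, e1, ← h1 (i.val/2) (by omega)]
      exact appc w _ _ (by omega)
    · have e1 : solMap t ht u x ⟨i.val, hi⟩ = x ⟨(i.val-(4*t+1))/2, by omega⟩ :=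
        solMap_2 t ht u x _ (by omega) (by omega)
      have e2 : x ⟨(i.val-(4*t+1))/2, by omega⟩ = w ⟨2*((i.val-(4*t+1))/2), by omega⟩ := rfl
      rw [show i = (⟨i.val, hi⟩ : Fin _) from Fin.ext rfl, e1, e2,
        h4 ((i.val-(4*t+1))/2) (by omega)]
      exact (appc w _ _ (by omega)).symm

lemma solMap_inj (t : ℕ) (ht : 1 ≤ t) (u : Fin (2*(2*t)) → Fin 2) :
    Function.Injective (solMap t ht u) := by
  intro x y hxy
  funext k
  have h := congrFun hxy ⟨2*k.val, by have := k.isLt; omega⟩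
  rwa [solMap_3 t ht u x _ k.isLt rfl, solMap_3 t ht u y _ k.isLt rfl,
    show (⟨k.val, k.isLt⟩ : Fin (4*t-2)) = k from Fin.ext rfl] at h

lemma valid_uniq (t : ℕ) (ht : 1 ≤ t) (u v : Fin (2*(2*t)) → Fin 2)
    (w : Fin (2*(8*t-2) - 2*(2*t)) → Fin 2) (hu : Valid t u w) (hv : Valid t v w) : u = v := by
  obtain ⟨hu1, hu23, _⟩ := (valid_iff t ht u w).mp hu
  obtain ⟨hv1, hv23, _⟩ := (valid_iff t ht v w).mp hv
  funext i
  have hi := i.isLt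
  rcases Nat.even_or_odd i.val with he | ho
  · have he2 := Nat.even_iff.mp he
    calc u i = u ⟨2*(i.val/2), by omega⟩ := appc u _ _ (by omega)
      _ = v ⟨2*(i.val/2), by omega⟩ :=
        ((hu1 (i.val/2) (by omega)).symm.trans (hv1 (i.val/2) (by omega)))
      _ = v i := appc v _ _ (by omega)
  · have ho2 := Nat.odd_iff.mp ho
    calc u i = u ⟨2*((i.val-1)/2)+1, by omega⟩ := appc u _ _ (by omega)
      _ = v ⟨2*((i.val-1)/2)+1, by omega⟩ :=
        ((hu23 ((i.val-1)/2) (by omega)).symm.trans (hv23 ((i.val-1)/2) (by omega)))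
      _ = v i := appc v _ _ (by omega)

/-- Maximal mixedness of block `A` for partition `B₀`: with `T = 2t`, `N = 8T−4`,
`|ψ⟩ = (𝒰_e(J_e)𝒰_o(J_o))^t|Φ_N⟩` and `A = {0,…,2T−1}`, the reduced density
matrix on `A` is `ρ_A = 2^{−2T}·Id`. -/
theorem blockA_maximally_mixed (t : ℕ) (ht : 1 ≤ t) (Jo Je : ℝ) :
    rdm (iotaA t) (kappaA t) (psiState (8*t-2) t Jo Je) =
      ((2:ℂ)^(2*(2*t)))⁻¹ • (1 : Matrix (Fin (2*(2*t)) → Fin 2) (Fin (2*(2*t)) → Fin 2) ℂ) := by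
  classical
  obtain ⟨c, hc, hpsi⟩ := psi_eq (8*t-2) t Jo Je
  have hcc : ∀ s, c s * conj (c s) = 1 := by
    intro s
    rw [Complex.mul_conj, ← Complex.sq_norm, hc]
    norm_num
  have hB : ∀ (u : Fin (2*(2*t)) → Fin 2) (w : Fin (2*(8*t-2) - 2*(2*t)) → Fin 2),
      psiState (8*t-2) t Jo Je (Sfun t u w) =
        c (Sfun t u w) * if Valid t u w then ((Real.sqrt 2 : ℂ))⁻¹^(8*t-2) else 0 := by
    intro u w
    rw [hpsi (Sfun t u w)]
    congr 1
    by_cases hV : Valid t u w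
    · rw [if_pos hV, Finset.prod_congr rfl (fun j _ => if_pos (hV j)),
        Finset.prod_const, Finset.card_univ, Fintype.card_fin]
    · rw [if_neg hV]
      rw [show ¬ Valid t u w ↔ _ from not_forall] at hV
      obtain ⟨j0, hj0⟩ := hV
      exact Finset.prod_eq_zero (Finset.mem_univ j0) (if_neg hj0)
  funext u v
  show (∑ w, psiState (8*t-2) t Jo Je (assemble (iotaA t) (kappaA t) u w) *
      conj (psiState (8*t-2) t Jo Je (assemble (iotaA t) (kappaA t) v w))) = _
  rw [Finset.sum_congr rfl (fun w _ => by rw [assemble_eq t u w, assemble_eq t v w, hB u w, hB v w])]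
  have hRHS : (((2:ℂ)^(2*(2*t)))⁻¹ •
      (1 : Matrix (Fin (2*(2*t)) → Fin 2) (Fin (2*(2*t)) → Fin 2) ℂ)) u v
      = ((2:ℂ)^(2*(2*t)))⁻¹ * (if u = v then 1 else 0) := by
    rw [Matrix.smul_apply, Matrix.one_apply, smul_eq_mul]
  rw [hRHS]
  by_cases huv : u = v
  · subst huv
    rw [if_pos rfl, mul_one]
    have hterm : ∀ w, (c (Sfun t u w) * if Valid t u w then ((Real.sqrt 2 : ℂ))⁻¹^(8*t-2) else 0) *
        conj (c (Sfun t u w) * if Valid t u w then ((Real.sqrt 2 : ℂ))⁻¹^(8*t-2) else 0) =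
        if Valid t u w then ((2:ℂ)⁻¹)^(8*t-2) else 0 := by
      intro w
      by_cases hV : Valid t u w
      · rw [if_pos hV, if_pos hV, map_mul]
        have hKr : conj (((Real.sqrt 2 : ℂ))⁻¹^(8*t-2)) = ((Real.sqrt 2 : ℂ))⁻¹^(8*t-2) := by
          rw [map_pow, map_inv₀, Complex.conj_ofReal]
        rw [hKr, show (c (Sfun t u w) * ((Real.sqrt 2:ℂ))⁻¹^(8*t-2)) *
            (conj (c (Sfun t u w)) * ((Real.sqrt 2:ℂ))⁻¹^(8*t-2)) =
            (c (Sfun t u w) * conj (c (Sfun t u w))) *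
            (((Real.sqrt 2:ℂ))⁻¹^(8*t-2) * ((Real.sqrt 2:ℂ))⁻¹^(8*t-2)) from by ring,
          hcc, one_mul, ← mul_pow, ← mul_inv, ← Complex.ofReal_mul,
          Real.mul_self_sqrt (by norm_num)]
        norm_num
      · rw [if_neg hV, if_neg hV, mul_zero, map_zero, mul_zero]
    rw [Finset.sum_congr rfl (fun w _ => hterm w)]
    rw [← Finset.sum_filter]
    rw [Finset.sum_const]
    have himg : Finset.univ.filter (fun w => Valid t u w) =
        Finset.image (solMap t ht u) Finset.univ := by
      ext w
      simp only [Finset.mem_filter, Finset.mem_univ, true_and, Finset.mem_image]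
      constructor
      · intro hV
        exact ⟨_, (valid_eq_solMap t ht u w hV).symm⟩
      · rintro ⟨x, rfl⟩
        exact valid_solMap t ht u x
    rw [himg, Finset.card_image_of_injective _ (solMap_inj t ht u), Finset.card_univ]
    have hcard : Fintype.card (Fin (4*t-2) → Fin 2) = 2^(4*t-2) := by
      simp [Fintype.card_fun]
    rw [hcard, nsmul_eq_mul, Nat.cast_pow, Nat.cast_ofNat, inv_pow]
    have key : (2:ℂ)^(8*t-2) = 2^(2*(2*t)) * 2^(4*t-2) := by
      rw [← pow_add]; congr 1; omega
    rw [key, mul_inv, ← mul_assoc, mul_comm ((2:ℂ)^(4*t-2)) (((2:ℂ)^(2*(2*t)))⁻¹), mul_assoc,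
      mul_inv_cancel₀ (pow_ne_zero _ two_ne_zero), mul_one]
  · rw [if_neg huv, mul_zero]
    apply Finset.sum_eq_zero
    intro w _
    by_cases hVu : Valid t u w
    · by_cases hVv : Valid t v w
      · exact absurd (valid_uniq t ht u v w hVu hVv) huv
      · rw [if_neg hVv, mul_zero, map_zero, mul_zero]
    · rw [if_neg hVu, mul_zero, zero_mul]
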